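/- For m ≥ 1, the m-fold convolution of central binomial coefficients satisfies ∑_{i_1+...+i_m = n} C(2i_1,i_1) C(2i_2,i_2) ⋯ C(2i_m,i_m) = 4^n · C(m/2 + n - 1, n), where the latter is the generalized binomial coefficient (m/2)(m/2+1)⋯(m/2+n-1)/n!. -/

import Mathlib

open Finset

private noncomputable def Af (x : ℚ) (k : ℕ) : ℚ := ∏ j ∈ range k, (x + j)

private lemma Af_zero (x : ℚ) : Af x 0 = 1 := by simp [Af]

private lemma Af_succ (x : ℚ) (k : ℕ) : Af x (k + 1) = Af x k * (x + k) := by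
  simp [Af, prod_range_succ]

private lemma vand (x y : ℚ) : ∀ n : ℕ,
    ∑ k ∈ range (n + 1), (n.choose k : ℚ) * Af x k * Af y (n - k) = Af (x + y) n := by
  intro n
  induction n with
  | zero => simp [Af_zero]
  | succ n ih =>
    have split : ∑ k ∈ range (n + 2), ((n+1).choose k : ℚ) * Af x k * Af y (n + 1 - k)
        = ∑ k ∈ range (n + 1), (n.choose k : ℚ) * Af x k * Af y (n + 1 - k)
          + ∑ k ∈ range (n + 1), (n.choose k : ℚ) * Af x (k+1) * Af y (n - k) := by
      rw [Finset.sum_range_succ' (fun k => ((n+1).choose k : ℚ) * Af x k * Af y (n + 1 - k))]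
      have : ∀ k ∈ range (n + 1), ((n+1).choose (k+1) : ℚ) * Af x (k+1) * Af y (n + 1 - (k+1))
          = (n.choose (k+1) : ℚ) * Af x (k+1) * Af y (n + 1 - (k+1))
            + (n.choose k : ℚ) * Af x (k+1) * Af y (n - k) := by
        intro k _
        have : n + 1 - (k + 1) = n - k := by omega
        rw [this, Nat.choose_succ_succ]
        push_cast [Nat.succ_eq_add_one]
        ring
      rw [Finset.sum_congr rfl this, Finset.sum_add_distrib]
      have : ∑ k ∈ range (n + 1), (n.choose (k+1) : ℚ) * Af x (k+1) * Af y (n + 1 - (k+1))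
            + ((n+1).choose 0 : ℚ) * Af x 0 * Af y (n + 1 - 0)
          = ∑ k ∈ range (n + 2), (n.choose k : ℚ) * Af x k * Af y (n + 1 - k) := by
        rw [Finset.sum_range_succ' (fun k => (n.choose k : ℚ) * Af x k * Af y (n + 1 - k))]
        simp
      rw [add_right_comm, this, Finset.sum_range_succ]
      simp [Nat.choose_succ_self]
    rw [split]
    have h1 : ∀ k ∈ range (n + 1), (n.choose k : ℚ) * Af x k * Af y (n + 1 - k)
        = (n.choose k : ℚ) * Af x k * Af y (n - k) * (y + (n - k : ℕ)) := by
      intro k hk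
      rw [mem_range] at hk
      have : n + 1 - k = (n - k) + 1 := by omega
      rw [this, Af_succ]; ring
    have h2 : ∀ k ∈ range (n + 1), (n.choose k : ℚ) * Af x (k+1) * Af y (n - k)
        = (n.choose k : ℚ) * Af x k * Af y (n - k) * (x + k) := by
      intro k _
      rw [Af_succ]; ring
    rw [Finset.sum_congr rfl h1, Finset.sum_congr rfl h2, ← Finset.sum_add_distrib]
    have h3 : ∀ k ∈ range (n + 1),
        (n.choose k : ℚ) * Af x k * Af y (n - k) * (y + (n - k : ℕ))
          + (n.choose k : ℚ) * Af x k * Af y (n - k) * (x + k)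
        = ((n.choose k : ℚ) * Af x k * Af y (n - k)) * (x + y + n) := by
      intro k hk
      rw [mem_range] at hk
      have : ((n - k : ℕ) : ℚ) = (n : ℚ) - k := by
        rw [Nat.cast_sub (by omega)]
      rw [this]; ring
    rw [Finset.sum_congr rfl h3, ← Finset.sum_mul, ih, Af_succ]

private lemma conv (x y : ℚ) (n : ℕ) :
    ∑ p ∈ Finset.HasAntidiagonal.antidiagonal n, (Af x p.1 / p.1.factorial) * (Af y p.2 / p.2.factorial)
      = Af (x + y) n / n.factorial := by
  rw [Finset.Nat.sum_antidiagonal_eq_sum_range_succ_mk]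
  rw [eq_div_iff (by exact_mod_cast n.factorial_ne_zero)]
  rw [← vand x y n, Finset.sum_mul]
  apply Finset.sum_congr rfl
  intro k hk
  rw [mem_range] at hk
  rw [Nat.cast_choose ℚ (show k ≤ n by omega)]
  have hk1 : (k.factorial : ℚ) ≠ 0 := by exact_mod_cast k.factorial_ne_zero
  have hk2 : ((n - k).factorial : ℚ) ≠ 0 := by exact_mod_cast (n - k).factorial_ne_zero
  field_simp

private lemma cb (n : ℕ) :
    ((2 * n).choose n : ℚ) = 4 ^ n * Af (1/2) n / n.factorial := by
  induction n with
  | zero => simp [Af_zero]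
  | succ n ih =>
    have key := Nat.succ_mul_centralBinom_succ n
    have hc : ∀ m : ℕ, Nat.centralBinom m = (2 * m).choose m := fun m => rfl
    rw [hc, hc] at key
    have keyQ : ((n : ℚ) + 1) * ((2 * (n + 1)).choose (n + 1) : ℚ)
        = 2 * (2 * n + 1) * ((2 * n).choose n : ℚ) := by exact_mod_cast key
    have hn1 : ((n : ℚ) + 1) ≠ 0 := by positivity
    have h2 : ((2 * (n + 1)).choose (n + 1) : ℚ)
        = 2 * (2 * n + 1) * ((2 * n).choose n : ℚ) / (n + 1) := by
      field_simp at keyQ ⊢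
      linarith [keyQ]
    rw [h2, ih, Af_succ, Nat.factorial_succ]
    have hf : (n.factorial : ℚ) ≠ 0 := by exact_mod_cast n.factorial_ne_zero
    push_cast
    field_simp
    ring

private lemma tuple_succ (F : ℕ → ℚ) (m n : ℕ) :
    ∑ f ∈ Finset.Nat.antidiagonalTuple (m + 1) n, ∏ j : Fin (m + 1), F (f j)
      = ∑ p ∈ Finset.HasAntidiagonal.antidiagonal n,
          F p.1 * ∑ g ∈ Finset.Nat.antidiagonalTuple m p.2, ∏ j : Fin m, F (g j) := by
  simp_rw [Finset.mul_sum]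
  have hsig : ∑ p ∈ Finset.HasAntidiagonal.antidiagonal n,
      ∑ g ∈ Finset.Nat.antidiagonalTuple m p.2, F p.1 * ∏ j : Fin m, F (g j)
      = ∑ x ∈ (Finset.HasAntidiagonal.antidiagonal n).sigma (fun p => Finset.Nat.antidiagonalTuple m p.2),
          F x.1.1 * ∏ j : Fin m, F (x.2 j) := by
    rw [Finset.sum_sigma]
  rw [hsig]
  symm
  apply Finset.sum_nbij' (i := fun a => Fin.cons a.1.1 a.2)
    (j := fun f => ⟨(f 0, ∑ i : Fin m, Fin.tail f i), Fin.tail f⟩)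
  · rintro ⟨⟨a, b⟩, g⟩ h
    simp only [Finset.mem_sigma, Finset.HasAntidiagonal.mem_antidiagonal,
      Finset.Nat.mem_antidiagonalTuple] at h
    rw [Finset.Nat.mem_antidiagonalTuple, Fin.sum_cons, h.2, h.1]
  · intro f hf
    rw [Finset.Nat.mem_antidiagonalTuple] at hf
    simp only [Finset.mem_sigma, Finset.HasAntidiagonal.mem_antidiagonal, Finset.Nat.mem_antidiagonalTuple]
    refine ⟨?_, trivial⟩
    rw [← hf, Fin.sum_univ_succ]
    rfl
  · rintro ⟨⟨a, b⟩, g⟩ h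
    simp only [Finset.mem_sigma, Finset.HasAntidiagonal.mem_antidiagonal,
      Finset.Nat.mem_antidiagonalTuple] at h
    simp only [Fin.cons_zero, Fin.tail_cons]
    congr 1
    rw [h.2]
  · intro f hf
    exact Fin.cons_self_tail f
  · rintro ⟨⟨a, b⟩, g⟩ h
    dsimp only
    rw [Fin.prod_univ_succ]
    simp

theorem central_binom_m_fold_convolution (m n : ℕ) (hm : 1 ≤ m) :
    (∑ f ∈ Finset.Nat.antidiagonalTuple m n,
        ∏ j : Fin m, ((2 * f j).choose (f j) : ℚ)) =
      4 ^ n * (∏ j ∈ range n, ((m : ℚ) / 2 + j)) / n.factorial := by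
  have key : ∀ m : ℕ, 1 ≤ m → ∀ n : ℕ,
      (∑ f ∈ Finset.Nat.antidiagonalTuple m n,
        ∏ j : Fin m, ((2 * f j).choose (f j) : ℚ))
      = 4 ^ n * Af ((m : ℚ) / 2) n / n.factorial := by
    intro m hm
    induction m, hm using Nat.le_induction with
    | base =>
      intro n
      rw [Finset.Nat.antidiagonalTuple_one, Finset.sum_singleton]
      simp only [Fin.prod_univ_one, Matrix.cons_val_zero]
      rw [cb n]
      norm_num
    | succ m hm ih =>
      intro n
      rw [tuple_succ (fun i => ((2 * i).choose i : ℚ)) m n]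
      have : ∀ p ∈ Finset.HasAntidiagonal.antidiagonal n,
          ((2 * p.1).choose p.1 : ℚ)
            * ∑ g ∈ Finset.Nat.antidiagonalTuple m p.2, ∏ j : Fin m, ((2 * g j).choose (g j) : ℚ)
          = 4 ^ n * ((Af (1/2) p.1 / p.1.factorial) * (Af ((m : ℚ)/2) p.2 / p.2.factorial)) := by
        intro p hp
        rw [Finset.HasAntidiagonal.mem_antidiagonal] at hp
        rw [ih p.2, cb p.1, ← hp, pow_add]
        ring
      rw [Finset.sum_congr rfl this, ← Finset.mul_sum, conv]
      have : (1/2 : ℚ) + (m : ℚ)/2 = ((m : ℕ) + 1 : ℚ)/2 := by ring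
      rw [this]
      push_cast
      ring
  rw [key m hm n]
  rfl
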